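/- Let $(\mathcal{S},\mathcal{L},\mathcal{P})$ be a labelled Markov chain. Any symmetric probabilistic simulation $R$ (a preorder such that $s\,R\,t$ implies $\mathcal{P}(s,l,X) \le \mathcal{P}(t,l,R(X))$ for all $X\subseteq\mathcal{S}$, $l\in\mathcal{L}$) is a probabilistic bisimulation, i.e., an equivalence relation such that $s\,R\,t$ implies $\mathcal{P}(s,l,E) = \mathcal{P}(t,l,E)$ for every equivalence class $E$ of $R$ and every label $l$. -/

import Mathlib

open scoped ENNReal

/-- Probability of jumping from `s` with label `l` into the set `X`. -/
noncomputable def pSet {S L : Type*} (P : S → L → S → ℝ≥0∞) (s : S) (l : L) (X : Set S) : ℝ≥0∞ :=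
  ∑' x : X, P s l x

/-- Relational image `R(X) = {y | ∃ x ∈ X, x R y}`. -/
def rimg {S : Type*} (R : S → S → Prop) (X : Set S) : Set S := {y | ∃ x ∈ X, R x y}

/-- `E` is an equivalence class of `R`. -/
def EqClass {S : Type*} (R : S → S → Prop) (E : Set S) : Prop := ∃ z, E = {y | R z y}

/-- A labelled Markov chain structure on a transition probability matrix. -/
structure IsLMC {S L : Type*} (P : S → L → S → ℝ≥0∞) : Prop where
  le_one : ∀ s l t, P s l t ≤ 1
  sum_le_one : ∀ s l, (∑' t, P s l t) ≤ 1

/-- A probabilistic simulation: a preorder `R` such that `s R t` implies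
`P(s,l,X) ≤ P(t,l,R(X))`. -/
def IsProbSim {S L : Type*} (P : S → L → S → ℝ≥0∞) (R : S → S → Prop) : Prop :=
  Reflexive R ∧ Transitive R ∧
    ∀ s t, R s t → ∀ (l : L) (X : Set S), pSet P s l X ≤ pSet P t l (rimg R X)

/-- A probabilistic bisimulation: an equivalence relation `R` such that `s R t` implies
`P(s,l,E) = P(t,l,E)` for every `R`-equivalence class `E`. -/
def IsProbBisim {S L : Type*} (P : S → L → S → ℝ≥0∞) (R : S → S → Prop) : Prop :=
  Equivalence R ∧
    ∀ s t, R s t → ∀ (l : L) (E : Set S), EqClass R E → pSet P s l E = pSet P t l E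

/-- Similarity: the union of all probabilistic simulations. -/
def ProbSimilar {S L : Type*} (P : S → L → S → ℝ≥0∞) (s t : S) : Prop :=
  ∃ R, IsProbSim P R ∧ R s t

/-- Bisimilarity: the union of all probabilistic bisimulations. -/
def Bisimilar {S L : Type*} (P : S → L → S → ℝ≥0∞) (s t : S) : Prop :=
  ∃ R, IsProbBisim P R ∧ R s t

/-- any symmetric probabilistic simulation on a labelled Markov chain
is a probabilistic bisimulation. -/
theorem stmt2 {S L : Type*} [Countable S] (P : S → L → S → ℝ≥0∞) (hP : IsLMC P)
    (R : S → S → Prop) (hsim : IsProbSim P R) (hsymm : Symmetric R) :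
    IsProbBisim P R := by
  obtain ⟨hrefl, htrans, hsimp⟩ := hsim
  refine ⟨⟨hrefl, fun h => hsymm h, fun h h' => htrans h h'⟩, ?_⟩
  intro s t hst l E hE
  obtain ⟨z, rfl⟩ := hE
  have himg : rimg R {y | R z y} = {y | R z y} := by
    ext y
    constructor
    · rintro ⟨x, hx, hxy⟩
      exact htrans hx hxy
    · intro hy
      exact ⟨y, hy, hrefl y⟩
  have h1 := hsimp s t hst l {y | R z y}
  have h2 := hsimp t s (hsymm hst) l {y | R z y}
  rw [himg] at h1 h2
  exact le_antisymm h1 h2
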